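/- Let p be a prime and M an abelian group that is derived p-complete, in the sense that Hom_ℤ(ℤ[1/p], M) = 0 and Ext^1_ℤ(ℤ[1/p], M) = 0. If moreover M[1/p] = 0 (i.e., every element of M is killed by a power of p), then M has bounded p-power torsion: there exists n ≥ 0 with p^n · M = 0. -/

import Mathlib

section
variable (p : ℕ)

abbrev Loc := Localization.Away ((p:ℕ):ℤ)

def pk (n : ℕ) : Submonoid.powers ((p:ℕ):ℤ) := ⟨((p:ℕ):ℤ)^n, n, rfl⟩

noncomputable def en (n : ℕ) : Loc p := Localization.mk 1 (pk p n)

lemma cast_eq_mk (r : ℤ) : ((r : ℤ) : Loc p) = Localization.mk r 1 := by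
  rw [Localization.mk_one_eq_algebraMap, eq_intCast]

lemma zsmul_mk (r a : ℤ) (s : Submonoid.powers ((p:ℕ):ℤ)) :
    r • Localization.mk a s = Localization.mk (r * a) s := by
  rw [zsmul_eq_mul, cast_eq_mk, Localization.mk_mul, one_mul]

lemma nsmul_mk (r : ℕ) (a : ℤ) (s : Submonoid.powers ((p:ℕ):ℤ)) :
    r • Localization.mk a s = Localization.mk (r * a) s := by
  rw [← Nat.cast_smul_eq_nsmul ℤ, zsmul_mk]

lemma L1 (n : ℕ) : p • en p (n+1) = en p n := by
  rw [en, en, nsmul_mk, Localization.mk_eq_mk_iff, Localization.r_iff_exists]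
  exact ⟨1, by push_cast [pk]; ring⟩

noncomputable def rho : (ℕ →₀ ℤ) →+ Loc p :=
  Finsupp.liftAddHom (fun n => (zmultiplesHom (Loc p)) (en p n))

lemma rho_single (n : ℕ) (r : ℤ) : rho p (Finsupp.single n r) = r • en p n := by
  simp [rho]

lemma rho_surj : Function.Surjective (rho p) := by
  intro z
  induction z using Localization.induction_on with
  | H y =>
    obtain ⟨n, hn⟩ := y.2.2
    refine ⟨Finsupp.single n y.1, ?_⟩
    rw [rho_single, en, zsmul_mk, mul_one]
    congr 1
    exact Subtype.ext hn
end

section D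
variable (p : ℕ)

noncomputable def dd : (ℕ →₀ ℤ) →+ (ℕ →₀ ℤ) :=
  AddMonoidHom.id _ - p • Finsupp.mapDomain.addMonoidHom Nat.succ

lemma dd_apply (c : ℕ →₀ ℤ) : dd p c = c - p • Finsupp.mapDomain Nat.succ c := rfl

lemma dd_apply_zero (c : ℕ →₀ ℤ) : (dd p c) 0 = c 0 := by
  rw [dd_apply, Finsupp.sub_apply, Finsupp.smul_apply,
    Finsupp.mapDomain_notin_range c 0 (by simp [Set.range, Nat.succ_ne_zero]), smul_zero, sub_zero]

lemma dd_apply_succ (c : ℕ →₀ ℤ) (n : ℕ) : (dd p c) (n+1) = c (n+1) - p * c n := by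
  rw [dd_apply, Finsupp.sub_apply, Finsupp.smul_apply,
    show n + 1 = Nat.succ n from rfl,
    Finsupp.mapDomain_apply Nat.succ_injective, nsmul_eq_mul]

lemma dd_inj : Function.Injective (dd p) := by
  intro c c' h
  have h' : ∀ n, (dd p c) n = (dd p c') n := fun n => by rw [h]
  ext n
  induction n using Nat.strong_induction_on with
  | _ n ih =>
    cases n with
    | zero => have := h' 0; rwa [dd_apply_zero, dd_apply_zero] at this
    | succ m =>
      have := h' (m+1)
      rw [dd_apply_succ, dd_apply_succ, ih m (Nat.lt_succ_self m)] at this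
      linarith

lemma rho_dd (c : ℕ →₀ ℤ) : rho p (dd p c) = 0 := by
  have : (rho p).comp (dd p) = 0 := by
    apply Finsupp.addHom_ext
    intro x y
    simp only [AddMonoidHom.comp_apply, AddMonoidHom.zero_apply, dd_apply,
      Finsupp.mapDomain_single, map_sub, map_nsmul, rho_single]
    haveI : SMulCommClass ℕ ℤ (Loc p) := ⟨fun n z x => by rw [← natCast_zsmul, ← natCast_zsmul, smul_smul, smul_smul, mul_comm]⟩
    rw [smul_comm, L1, sub_self]
  calc rho p (dd p c) = ((rho p).comp (dd p)) c := rfl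
  _ = 0 := by rw [this]; rfl
end D


section Ker
variable (p : ℕ)

lemma castLoc_inj (hp : p.Prime) : Function.Injective (fun r : ℤ => (r : Loc p)) := by
  have hle : Submonoid.powers ((p:ℕ):ℤ) ≤ nonZeroDivisors ℤ :=
    powers_le_nonZeroDivisors_of_noZeroDivisors
      (by exact_mod_cast (Nat.Prime.pos hp).ne')
  have h := IsLocalization.injective (Loc p) hle
  intro a b hab
  apply h
  rw [eq_intCast (algebraMap ℤ (Loc p)), eq_intCast (algebraMap ℤ (Loc p))]
  exact hab

lemma mk_pow_sub (k n : ℕ) (hk : k ≤ n) :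
    Localization.mk (((p:ℕ):ℤ)^n) (pk p k) = ((((p:ℕ):ℤ)^(n-k) : ℤ) : Loc p) := by
  rw [cast_eq_mk, Localization.mk_eq_mk_iff, Localization.r_iff_exists]
  refine ⟨1, ?_⟩
  simp only [pk, OneMemClass.coe_one, one_mul]
  rw [← pow_add]
  congr 1
  omega

lemma ker_rho_sub (hp : p.Prime) (x : ℕ →₀ ℤ) (hx : rho p x = 0) : ∃ c, dd p c = x := by
  classical
  set N : ℕ := x.support.sup id with hN
  have hsupp : ∀ k, N < k → x k = 0 := by
    intro k hk
    by_contra h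
    have h1 : k ∈ x.support := Finsupp.mem_support_iff.mpr h
    have h2 := Finset.le_sup (f := id) h1
    simp only [id_eq] at h2
    omega
  set g : ℕ → ℤ := fun n => ∑ k ∈ Finset.range (n+1), ((p:ℕ):ℤ)^(n-k) * x k with hg
  have g0 : g 0 = x 0 := by simp [hg]
  have gsucc : ∀ n, g (n+1) = p * g n + x (n+1) := by
    intro n
    rw [hg]
    simp only []
    rw [Finset.sum_range_succ, Nat.sub_self, pow_zero, one_mul, Finset.mul_sum]
    congr 1
    apply Finset.sum_congr rfl
    intro k hk
    rw [Finset.mem_range] at hk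
    rw [← mul_assoc, ← pow_succ']
    congr 2
    omega
  have gcast : ∀ n, N ≤ n → ((g n : ℤ) : Loc p) = Localization.mk (((p:ℕ):ℤ)^n) 1 * rho p x := by
    intro n hn
    have hsub : x.support ⊆ Finset.range (n+1) := by
      intro k hk
      have h2 := Finset.le_sup (f := id) hk
      simp only [id_eq] at h2
      rw [Finset.mem_range]
      omega
    have hrho : rho p x = ∑ k ∈ Finset.range (n+1), x k • en p k := by
      rw [rho, Finsupp.liftAddHom_apply, Finsupp.sum_of_support_subset x hsub]
      · rfl
      · intro i _; simp
    rw [hrho, Finset.mul_sum]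
    rw [hg]
    push_cast [Int.cast_sum]
    apply Finset.sum_congr rfl
    intro k hk
    rw [Finset.mem_range] at hk
    have hkn : k ≤ n := by omega
    rw [zsmul_eq_mul, mul_left_comm, en, Localization.mk_mul, mul_one, one_mul,
      mk_pow_sub p k n hkn]
    push_cast
    ring
  have gN : ∀ n, N ≤ n → g n = 0 := by
    intro n hn
    induction n with
    | zero =>
      apply castLoc_inj p hp
      show ((g 0 : ℤ) : Loc p) = ((0 : ℤ) : Loc p)
      rw [gcast 0 hn, hx, mul_zero, Int.cast_zero]
    | succ m ih =>
      by_cases hNm : N ≤ m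
      · rw [gsucc, ih hNm, mul_zero, zero_add]
        exact hsupp (m+1) (by omega)
      · apply castLoc_inj p hp
        show ((g (m+1) : ℤ) : Loc p) = ((0 : ℤ) : Loc p)
        rw [gcast (m+1) hn, hx, mul_zero, Int.cast_zero]
  refine ⟨Finsupp.onFinset (Finset.range (N+1)) g ?_, ?_⟩
  · intro n hn
    rw [Finset.mem_range]
    by_contra h
    exact hn (gN n (by omega))
  · ext n
    cases n with
    | zero => rw [dd_apply_zero, Finsupp.onFinset_apply, g0]
    | succ m =>
      rw [dd_apply_succ, Finsupp.onFinset_apply, Finsupp.onFinset_apply, gsucc]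
      ring
end Ker

section Bridge
variable (p : ℕ) (M : Type) [AddCommGroup M]

lemma compat_zero (hp : p.Prime)
    (hHom : ∀ f : Localization.Away ((p:ℕ):ℤ) →+ M, f = 0)
    (a : ℕ → M) (h : ∀ n, a n = p • a (n+1)) : a 0 = 0 := by
  classical
  set φa : (ℕ →₀ ℤ) →+ M :=
    Finsupp.liftAddHom (fun n => (zmultiplesHom M) (a n)) with hφa
  have hker : (rho p).ker ≤ φa.ker := by
    intro x hx
    obtain ⟨c, rfl⟩ := ker_rho_sub p hp x hx
    have hcomp : φa.comp (dd p) = 0 := by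
      apply Finsupp.addHom_ext
      intro x y
      simp only [AddMonoidHom.comp_apply, AddMonoidHom.zero_apply, dd_apply,
        Finsupp.mapDomain_single, map_sub, map_nsmul, hφa,
        Finsupp.liftAddHom_apply_single, zmultiplesHom_apply]
      rw [smul_comm, ← h, sub_self]
    show φa (dd p c) = 0
    calc φa (dd p c) = (φa.comp (dd p)) c := rfl
    _ = 0 := by rw [hcomp]; rfl
  let fbar := QuotientAddGroup.lift (rho p).ker φa hker
  let e := QuotientAddGroup.quotientKerEquivOfSurjective (rho p) (rho_surj p)
  let f : Localization.Away ((p:ℕ):ℤ) →+ M := fbar.comp (e.symm : Loc p ≃+ _).toAddMonoidHom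
  have hf := hHom f
  have h1 : a 0 = φa (Finsupp.single 0 1) := by
    simp [hφa]
  have h2 : φa (Finsupp.single 0 1) = f (rho p (Finsupp.single 0 1)) := by
    show _ = fbar (e.symm (rho p (Finsupp.single 0 1)))
    have : e ((QuotientAddGroup.mk' (rho p).ker) (Finsupp.single 0 1)) = rho p (Finsupp.single 0 1) := rfl
    rw [← this, AddEquiv.symm_apply_apply]
    rfl
  rw [h1, h2, hf]
  rfl
end Bridge

section Solve
variable (p : ℕ) (M : Type) [AddCommGroup M]

lemma exists_solution (hp : p.Prime)
    (hExt : ∀ (E : Type) [AddCommGroup E]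
      (ι : M →+ E) (π : E →+ Localization.Away ((p:ℕ):ℤ)),
      Function.Injective ι → Function.Surjective π →
      (∀ e : E, π e = 0 ↔ ∃ m : M, ι m = e) →
      ∃ s : Localization.Away ((p:ℕ):ℤ) →+ E, ∀ z, π (s z) = z)
    (w : ℕ → M) : ∃ a : ℕ → M, ∀ n, a n = w n + p • a (n+1) := by
  classical
  set φw : (ℕ →₀ ℤ) →+ M :=
    Finsupp.liftAddHom (fun n => (zmultiplesHom M) (w n)) with hφw
  set D : (ℕ →₀ ℤ) →+ M × (ℕ →₀ ℤ) := AddMonoidHom.prod φw (dd p) with hD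
  let E := (M × (ℕ →₀ ℤ)) ⧸ D.range
  let q : M × (ℕ →₀ ℤ) →+ E := QuotientAddGroup.mk' D.range
  let ι : M →+ E := q.comp (AddMonoidHom.inl M (ℕ →₀ ℤ))
  have hvanish : D.range ≤ ((rho p).comp (AddMonoidHom.snd M (ℕ →₀ ℤ))).ker := by
    rintro _ ⟨c, rfl⟩
    show rho p ((D c).2) = 0
    rw [hD]
    exact rho_dd p c
  let π : E →+ Localization.Away ((p:ℕ):ℤ) :=
    QuotientAddGroup.lift D.range ((rho p).comp (AddMonoidHom.snd M (ℕ →₀ ℤ))) hvanish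
  have hπq : ∀ mx : M × (ℕ →₀ ℤ), π (q mx) = rho p mx.2 := fun mx => rfl
  have hιinj : Function.Injective ι := by
    intro m m' hmm
    have : ι (m - m') = 0 := by rw [map_sub, hmm, sub_self]
    have hmem : ((m - m', (0 : ℕ →₀ ℤ)) : M × (ℕ →₀ ℤ)) ∈ D.range := by
      rwa [show ((m - m', (0:ℕ →₀ ℤ)) : M × (ℕ →₀ ℤ)) = (AddMonoidHom.inl M (ℕ →₀ ℤ)) (m - m') from rfl,
        ← QuotientAddGroup.eq_zero_iff]
    obtain ⟨c, hc⟩ := hmem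
    have hc2 : dd p c = 0 := congrArg Prod.snd hc
    have hc0 : c = 0 := dd_inj p (by rw [hc2]; exact (map_zero (dd p)).symm)
    have hc1 : φw c = m - m' := congrArg Prod.fst hc
    rw [hc0, map_zero] at hc1
    have h0 : m - m' = 0 := hc1.symm
    exact sub_eq_zero.mp h0
  have hπsurj : Function.Surjective π := by
    intro z
    obtain ⟨x, hx⟩ := rho_surj p z
    exact ⟨q (0, x), by rw [hπq]; exact hx⟩
  have hexact : ∀ e : E, π e = 0 ↔ ∃ m : M, ι m = e := by
    intro e
    constructor
    · intro he
      induction e using QuotientAddGroup.induction_on with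
      | H mx =>
        obtain ⟨m0, x⟩ := mx
        have hx : rho p x = 0 := by rw [← hπq (m0, x)]; exact he
        obtain ⟨c, hc⟩ := ker_rho_sub p hp x hx
        refine ⟨m0 - φw c, ?_⟩
        show q _ = q _
        have : ((m0, x) : M × (ℕ →₀ ℤ)) - (AddMonoidHom.inl M (ℕ →₀ ℤ)) (m0 - φw c) ∈ D.range := by
          refine ⟨c, ?_⟩
          rw [hD]
          apply Prod.ext
          · show φw c = m0 - (m0 - φw c)
            abel
          · show dd p c = x - 0
            rw [hc, sub_zero]
        refine (QuotientAddGroup.eq).mpr ?_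
        rw [neg_add_eq_sub]
        exact this
    · rintro ⟨m, rfl⟩
      show rho p ((0:M), (0: ℕ →₀ ℤ)).2 = 0
      exact map_zero _
  obtain ⟨s, hs⟩ := hExt E ι π hιinj hπsurj hexact
  have hsplit : ∀ n : ℕ, π (s (en p n) - q (0, Finsupp.single n 1)) = 0 := by
    intro n
    rw [map_sub, hs, hπq]
    show en p n - rho p (Finsupp.single n 1) = 0
    rw [rho_single, one_zsmul, sub_self]
  choose α hα using fun n => (hexact _).mp (hsplit n)
  refine ⟨α, ?_⟩
  intro n
  have smulq : ∀ (x : ℕ →₀ ℤ), p • q ((0:M), x) = q (0, p • x) := by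
    intro x
    rw [← map_nsmul]
    congr 1
    apply Prod.ext <;> simp
  have key : ι (α n) = ι (w n + p • α (n+1)) := by
    rw [map_add, map_nsmul, hα, hα]
    have h1 : s (en p n) = p • s (en p (n+1)) := by
      rw [← map_nsmul, L1]
    have hD2 : D (Finsupp.single n 1)
        = (w n, Finsupp.single n 1 - p • Finsupp.single (n+1) 1) := by
      rw [hD]
      apply Prod.ext
      · show φw (Finsupp.single n 1) = w n
        simp [hφw]
      · show dd p (Finsupp.single n 1) = _
        rw [dd_apply, Finsupp.mapDomain_single]
    have hD1 : q (w n, Finsupp.single n 1 - p • Finsupp.single (n+1) 1) = 0 := by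
      rw [← hD2]
      exact (QuotientAddGroup.eq_zero_iff _).mpr ⟨_, rfl⟩
    have hsum : ((w n, Finsupp.single n (1:ℤ) - p • Finsupp.single (n+1) (1:ℤ)) : M × (ℕ →₀ ℤ))
        = (AddMonoidHom.inl M (ℕ →₀ ℤ)) (w n) + ((0:M), Finsupp.single n (1:ℤ))
          - ((0:M), p • Finsupp.single (n+1) (1:ℤ)) := by
      apply Prod.ext
      · show w n = w n + 0 - 0
        abel
      · show Finsupp.single n (1:ℤ) - p • Finsupp.single (n+1) 1
            = 0 + Finsupp.single n 1 - p • Finsupp.single (n+1) 1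
        rw [zero_add]
    have hq0 : ι (w n) + q ((0:M), Finsupp.single n (1:ℤ))
        - p • q ((0:M), Finsupp.single (n+1) (1:ℤ)) = 0 := by
      rw [smulq]
      rw [show ι (w n) = q ((AddMonoidHom.inl M (ℕ →₀ ℤ)) (w n)) from rfl]
      rw [← map_add, ← map_sub, ← hsum, hD1]
    rw [h1, nsmul_sub]
    have h2 : ι (w n) = p • q ((0:M), Finsupp.single (n+1) (1:ℤ))
        - q ((0:M), Finsupp.single n (1:ℤ)) :=
      eq_sub_of_add_eq (sub_eq_zero.mp hq0)
    rw [h2]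
    abel
  have := hιinj key
  rw [this]
end Solve

/-- (Bhatt) A derived `p`-complete abelian group `M` (no maps and no extensions from
`ℤ[1/p]`) in which every element is killed by a power of `p` has bounded `p`-power
torsion. -/
theorem bounded_p_torsion_of_derived_p_complete
    (p : ℕ) (hp : p.Prime) (M : Type) [AddCommGroup M]
    (hHom : ∀ f : Localization.Away (p : ℤ) →+ M, f = 0)
    (hExt : ∀ (E : Type) [AddCommGroup E]
      (ι : M →+ E) (π : E →+ Localization.Away (p : ℤ)),
      Function.Injective ι → Function.Surjective π →
      (∀ e : E, π e = 0 ↔ ∃ m : M, ι m = e) →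
      ∃ s : Localization.Away (p : ℤ) →+ E, ∀ z, π (s z) = z)
    (htors : ∀ x : M, ∃ n : ℕ, p ^ n • x = 0) :
    ∃ n : ℕ, ∀ x : M, p ^ n • x = 0 := by
  classical
  by_contra hcon
  push_neg at hcon
  choose t ht using htors
  have compat : ∀ a : ℕ → M, (∀ n, a n = p • a (n+1)) → a 0 = 0 :=
    compat_zero p M hp hHom
  have claim1 : ∀ j c : ℕ, ∃ x : M,
      ¬ ∃ u v : M, p^c • v = 0 ∧ p^j • x = p^(j+1) • u + v := by
    intro j c
    by_contra hno
    rw [not_exists] at hno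
    have hall : ∀ x : M, ∃ u v : M, p^c • v = 0 ∧ p^j • x = p^(j+1) • u + v :=
      fun x => not_not.mp (hno x)
    have hdiv : ∀ x : M, ∃ u : M, p^(j+c) • x = p^(j+c+1) • u := by
      intro x
      obtain ⟨u, v, hv, hx⟩ := hall x
      have h2 : p^c • (p^j • x) = p^c • (p^(j+1) • u + v) := by rw [hx]
      rw [smul_add, hv, add_zero, ← mul_smul, ← mul_smul, ← pow_add, ← pow_add] at h2
      refine ⟨u, ?_⟩
      rw [show j+c = c+j from by omega, show c+j+1 = c+(j+1) from by omega]
      exact h2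
    choose f hf using hdiv
    obtain ⟨x0, hx0⟩ := hcon (j+c)
    apply hx0
    have hz := compat (fun n => p^(j+c) • (f^[n] x0)) ?_
    · simpa using hz
    · intro n
      show p^(j+c) • (f^[n] x0) = p • (p^(j+c) • (f^[n+1] x0))
      rw [Function.iterate_succ_apply', ← mul_smul, ← pow_succ']
      exact hf (f^[n] x0)
  choose X hX using claim1
  -- recursive construction of the bad sequence
  let G : ℕ → M × ℕ := fun K => Nat.rec ((X 0 0, t (X 0 0)))
    (fun K ih => (X (2*(K+1)) ih.2, ih.2 + t (X (2*(K+1)) ih.2))) K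
  let w : ℕ → M := fun K => (G K).1
  let τ : ℕ → ℕ := fun K => Nat.rec 0 (fun K _ => (G K).2) K
  have hτS : ∀ K, τ (K+1) = (G K).2 := fun K => rfl
  have hwX : ∀ K, w K = X (2*K) (τ K) := by
    intro K
    cases K with
    | zero => rfl
    | succ K => rfl
  have hG2 : ∀ K, (G K).2 = τ K + t (w K) := by
    intro K
    cases K with
    | zero => show t (X 0 0) = 0 + t (X 0 0); rw [Nat.zero_add]
    | succ K => rfl
  have hτmono : Monotone τ := by
    apply monotone_nat_of_le_succ
    intro K
    rw [hτS, hG2]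
    omega
  have killmono : ∀ (a b : ℕ) (x : M), a ≤ b → p^a • x = 0 → p^b • x = 0 := by
    intro a b x hab h
    rw [show p^b = p^(b-a) * p^a from by rw [← pow_add]; congr 1; omega, mul_smul, h, smul_zero]
  have kill : ∀ k K, k < K → p^(τ K) • w k = 0 := by
    intro k K hkK
    apply killmono (t (w k)) _ _ _ (ht (w k))
    have h1 : t (w k) ≤ τ (k+1) := by rw [hτS, hG2]; omega
    exact le_trans h1 (hτmono hkK)
  obtain ⟨a, ha⟩ := exists_solution p M hp hExt w
  have hps : ∀ c, a 0 = (∑ k ∈ Finset.range c, p^k • w k) + p^c • a c := by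
    intro c
    induction c with
    | zero => simp
    | succ c ihc =>
      rw [Finset.sum_range_succ]
      calc a 0 = (∑ k ∈ Finset.range c, p^k • w k) + p^c • a c := ihc
      _ = (∑ k ∈ Finset.range c, p^k • w k) + (p^c • w c + p^(c+1) • a (c+1)) := by
          rw [ha c, smul_add, ← mul_smul, ← pow_succ]
      _ = _ := by abel
  set T := t (a 0) with hTdef
  have hT : p^T • a 0 = 0 := ht (a 0)
  have h0 : (0:M) = (∑ k ∈ Finset.range (T+2), p^(T+k) • w k) + p^(T+(T+2)) • a (T+2) := by
    calc (0:M) = p^T • a 0 := hT.symm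
    _ = p^T • ((∑ k ∈ Finset.range (T+2), p^k • w k) + p^(T+2) • a (T+2)) := by rw [← hps]
    _ = _ := by
      rw [smul_add, Finset.smul_sum, ← mul_smul, ← pow_add]
      congr 1
      apply Finset.sum_congr rfl
      intro k _
      rw [← mul_smul, ← pow_add]
  rw [Finset.sum_range_succ, Finset.sum_range_succ] at h0
  -- h0 : 0 = ((Σ_{k<T} + p^{T+T} w T) + p^{T+(T+1)} w (T+1)) + p^{T+(T+2)} a (T+2)
  have hε : p^(τ T) • (∑ k ∈ Finset.range T, p^(T+k) • w k) = 0 := by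
    rw [Finset.smul_sum]
    apply Finset.sum_eq_zero
    intro k hk
    rw [← mul_smul, mul_comm, mul_smul, kill k T (Finset.mem_range.mp hk), smul_zero]
  have hXT := hX (2*T) (τ T)
  rw [← hwX T] at hXT
  apply hXT
  refine ⟨-(p • a (T+2)) - w (T+1), -(∑ k ∈ Finset.range T, p^(T+k) • w k), ?_, ?_⟩
  · rw [smul_neg, hε, neg_zero]
  · rw [show 2*T = T+T from by omega, show T+T+1 = T+(T+1) from by omega]
    have e4 : p^(T+(T+1)) • (-(p • a (T+2)) - w (T+1))
        = -(p^(T+(T+2)) • a (T+2)) - p^(T+(T+1)) • w (T+1) := by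
      rw [smul_sub, smul_neg, ← mul_smul, ← pow_succ,
        show T+(T+1)+1 = T+(T+2) from by omega]
    rw [e4, ← sub_eq_zero]
    have h5 : p^(T+T) • w T -
        ((-(p^(T+(T+2)) • a (T+2)) - p^(T+(T+1)) • w (T+1)) +
          -(∑ k ∈ Finset.range T, p^(T+k) • w k))
        = (((∑ k ∈ Finset.range T, p^(T+k) • w k) + p^(T+T) • w T)
            + p^(T+(T+1)) • w (T+1)) + p^(T+(T+2)) • a (T+2) := by abel
    rw [h5]
    exact h0.symm
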